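/- Let a < T be real numbers and let f : ℝ × ℝ × ℝ × ℝ → ℝ, (t, y, v, z) ↦ f(t, y, v, z), be continuously differentiable. Suppose ỹ ∈ C¹([a,T], ℝ) is a local extremizer (a local minimizer or local maximizer with respect to the C¹ norm) of J[y] = ∫_a^T f(t, y(t), y'(t), y(T)) dt among all y ∈ C¹([a,T], ℝ) with y(a) = ỹ(a). Then for every h ∈ C¹([a,T], ℝ) with h(a) = 0 one has ∫_a^T [ f_y(t, ỹ(t), ỹ'(t), ỹ(T)) h(t) + f_v(t, ỹ(t), ỹ'(t), ỹ(T)) h'(t) + f_z(t, ỹ(t), ỹ'(t), ỹ(T)) h(T) ] dt = 0. -/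

import Mathlib

open Set intervalIntegral

/-- Partial derivative of `f (t, y, v, z)` with respect to the second argument `y`. -/
noncomputable def fy (f : ℝ → ℝ → ℝ → ℝ → ℝ) (t y v z : ℝ) : ℝ :=
  deriv (fun s => f t s v z) y

/-- Partial derivative of `f (t, y, v, z)` with respect to the third argument `v`. -/
noncomputable def fv (f : ℝ → ℝ → ℝ → ℝ → ℝ) (t y v z : ℝ) : ℝ :=
  deriv (fun s => f t y s z) v

/-- Partial derivative of `f (t, y, v, z)` with respect to the fourth argument `z`. -/
noncomputable def fz (f : ℝ → ℝ → ℝ → ℝ → ℝ) (t y v z : ℝ) : ℝ :=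
  deriv (fun s => f t y v s) z

section Aux

open Metric MeasureTheory

variable {f : ℝ → ℝ → ℝ → ℝ → ℝ}

lemma fy_eq_fderiv (hf : ContDiff ℝ 1 (fun p : ℝ × ℝ × ℝ × ℝ => f p.1 p.2.1 p.2.2.1 p.2.2.2))
    (t y v z : ℝ) :
    fy f t y v z
      = fderiv ℝ (fun p : ℝ × ℝ × ℝ × ℝ => f p.1 p.2.1 p.2.2.1 p.2.2.2) (t, y, v, z) (0, 1, 0, 0) := by
  have hL : HasDerivAt (fun s : ℝ => ((t, s, v, z) : ℝ × ℝ × ℝ × ℝ)) (0, 1, 0, 0) y :=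
    (hasDerivAt_const y t).prodMk ((hasDerivAt_id y).prodMk
      ((hasDerivAt_const y v).prodMk (hasDerivAt_const y z)))
  exact ((hf.differentiable one_ne_zero (t, y, v, z)).hasFDerivAt.comp_hasDerivAt y hL).deriv

lemma fv_eq_fderiv (hf : ContDiff ℝ 1 (fun p : ℝ × ℝ × ℝ × ℝ => f p.1 p.2.1 p.2.2.1 p.2.2.2))
    (t y v z : ℝ) :
    fv f t y v z
      = fderiv ℝ (fun p : ℝ × ℝ × ℝ × ℝ => f p.1 p.2.1 p.2.2.1 p.2.2.2) (t, y, v, z) (0, 0, 1, 0) := by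
  have hL : HasDerivAt (fun s : ℝ => ((t, y, s, z) : ℝ × ℝ × ℝ × ℝ)) (0, 0, 1, 0) v :=
    (hasDerivAt_const v t).prodMk ((hasDerivAt_const v y).prodMk
      ((hasDerivAt_id v).prodMk (hasDerivAt_const v z)))
  exact ((hf.differentiable one_ne_zero (t, y, v, z)).hasFDerivAt.comp_hasDerivAt v hL).deriv

lemma fz_eq_fderiv (hf : ContDiff ℝ 1 (fun p : ℝ × ℝ × ℝ × ℝ => f p.1 p.2.1 p.2.2.1 p.2.2.2))
    (t y v z : ℝ) :
    fz f t y v z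
      = fderiv ℝ (fun p : ℝ × ℝ × ℝ × ℝ => f p.1 p.2.1 p.2.2.1 p.2.2.2) (t, y, v, z) (0, 0, 0, 1) := by
  have hL : HasDerivAt (fun s : ℝ => ((t, y, v, s) : ℝ × ℝ × ℝ × ℝ)) (0, 0, 0, 1) z :=
    (hasDerivAt_const z t).prodMk ((hasDerivAt_const z y).prodMk
      ((hasDerivAt_const z v).prodMk (hasDerivAt_id z)))
  exact ((hf.differentiable one_ne_zero (t, y, v, z)).hasFDerivAt.comp_hasDerivAt z hL).deriv

lemma fderiv_eval (hf : ContDiff ℝ 1 (fun p : ℝ × ℝ × ℝ × ℝ => f p.1 p.2.1 p.2.2.1 p.2.2.2))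
    (t y v z b c d : ℝ) :
    fderiv ℝ (fun p : ℝ × ℝ × ℝ × ℝ => f p.1 p.2.1 p.2.2.1 p.2.2.2) (t, y, v, z) (0, b, c, d)
      = b * fy f t y v z + c * fv f t y v z + d * fz f t y v z := by
  have hvec : ((0 : ℝ), b, c, d)
      = b • ((0:ℝ), (1:ℝ), (0:ℝ), (0:ℝ)) + c • ((0:ℝ), (0:ℝ), (1:ℝ), (0:ℝ))
        + d • ((0:ℝ), (0:ℝ), (0:ℝ), (1:ℝ)) := by
    simp [Prod.ext_iff]
  rw [hvec, map_add, map_add, ContinuousLinearMap.map_smul, ContinuousLinearMap.map_smul,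
    ContinuousLinearMap.map_smul, smul_eq_mul, smul_eq_mul, smul_eq_mul,
    fy_eq_fderiv hf, fv_eq_fderiv hf, fz_eq_fderiv hf]

end Aux

/-- At a local `C¹` extremizer `ỹ` of `J[y] = ∫_a^T f (t, y t, y' t, y T) dt` (among `C¹`
functions with the same initial value), the first variation vanishes in every direction
`h ∈ C¹` with `h a = 0`. -/
theorem first_variation_vanishes_at_extremizer
    (a T : ℝ) (haT : a < T)
    (f : ℝ → ℝ → ℝ → ℝ → ℝ)
    (hf : ContDiff ℝ 1 (fun p : ℝ × ℝ × ℝ × ℝ => f p.1 p.2.1 p.2.2.1 p.2.2.2))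
    (ytil : ℝ → ℝ) (hy : ContDiff ℝ 1 ytil)
    (hext : ∃ ε > 0,
      ((∀ y : ℝ → ℝ, ContDiff ℝ 1 y → y a = ytil a →
          (∀ t ∈ Icc a T, |y t - ytil t| < ε ∧ |deriv y t - deriv ytil t| < ε) →
          (∫ t in a..T, f t (y t) (deriv y t) (y T)) ≤
            ∫ t in a..T, f t (ytil t) (deriv ytil t) (ytil T)) ∨
        (∀ y : ℝ → ℝ, ContDiff ℝ 1 y → y a = ytil a →
          (∀ t ∈ Icc a T, |y t - ytil t| < ε ∧ |deriv y t - deriv ytil t| < ε) →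
          (∫ t in a..T, f t (ytil t) (deriv ytil t) (ytil T)) ≤
            ∫ t in a..T, f t (y t) (deriv y t) (y T)))) :
    ∀ h : ℝ → ℝ, ContDiff ℝ 1 h → h a = 0 →
      (∫ t in a..T,
        fy f t (ytil t) (deriv ytil t) (ytil T) * h t
          + fv f t (ytil t) (deriv ytil t) (ytil T) * deriv h t
          + fz f t (ytil t) (deriv ytil t) (ytil T) * h T) = 0 := by
  intro h hh ha0
  classical
  obtain ⟨ε, hε, hext⟩ := hext
  set F4 : ℝ × ℝ × ℝ × ℝ → ℝ := fun p => f p.1 p.2.1 p.2.2.1 p.2.2.2 with hF4def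
  -- continuity facts
  have hyc : Continuous ytil := hy.continuous
  have hyc' : Continuous (deriv ytil) := hy.continuous_deriv le_rfl
  have hhc : Continuous h := hh.continuous
  have hhc' : Continuous (deriv h) := hh.continuous_deriv le_rfl
  have hF4c : Continuous F4 := hf.continuous
  have hG : Continuous (fderiv ℝ F4) := hf.continuous_fderiv one_ne_zero
  -- the perturbed paths and integrands
  set P : ℝ → ℝ → ℝ × ℝ × ℝ × ℝ :=
    fun s t => (t, ytil t + s * h t, deriv ytil t + s * deriv h t, ytil T + s * h T) with hPdef
  set F : ℝ → ℝ → ℝ := fun s t => F4 (P s t) with hFdef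
  set F' : ℝ → ℝ → ℝ := fun s t => fderiv ℝ F4 (P s t) (0, h t, deriv h t, h T) with hF'def
  have hPc : Continuous (fun q : ℝ × ℝ => P q.1 q.2) := by
    apply Continuous.prodMk continuous_snd
    apply Continuous.prodMk
    · exact (hyc.comp continuous_snd).add (continuous_fst.mul (hhc.comp continuous_snd))
    apply Continuous.prodMk
    · exact (hyc'.comp continuous_snd).add (continuous_fst.mul (hhc'.comp continuous_snd))
    · exact continuous_const.add (continuous_fst.mul continuous_const)
  have hF'c : Continuous (fun q : ℝ × ℝ => F' q.1 q.2) := by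
    apply Continuous.clm_apply (hG.comp hPc)
    exact continuous_const.prodMk ((hhc.comp continuous_snd).prodMk
      ((hhc'.comp continuous_snd).prodMk continuous_const))
  -- pointwise derivative in the parameter s
  have hdiff : ∀ s t : ℝ, HasDerivAt (fun s => F s t) (F' s t) s := by
    intro s t
    have h2 : HasDerivAt (fun s : ℝ => ytil t + s * h t) (h t) s := by
      exact (hasDerivAt_mul_const (h t)).const_add (ytil t)
    have h3 : HasDerivAt (fun s : ℝ => deriv ytil t + s * deriv h t) (deriv h t) s := by
      exact (hasDerivAt_mul_const (deriv h t)).const_add (deriv ytil t)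
    have h4 : HasDerivAt (fun s : ℝ => ytil T + s * h T) (h T) s := by
      exact (hasDerivAt_mul_const (h T)).const_add (ytil T)
    have hP : HasDerivAt (fun s : ℝ => P s t) (0, h t, deriv h t, h T) s :=
      (hasDerivAt_const s t).prodMk (h2.prodMk (h3.prodMk h4))
    exact ((hf.differentiable one_ne_zero (P s t)).hasFDerivAt.comp_hasDerivAt s hP)
  -- uniform bound on the derivative near s = 0
  have hK : IsCompact ((Icc (-1 : ℝ) 1) ×ˢ (Icc a T)) := isCompact_Icc.prod isCompact_Icc
  obtain ⟨C, hC⟩ := hK.exists_bound_of_continuousOn hF'c.continuousOn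
  -- differentiation under the integral sign
  have hmain := intervalIntegral.hasDerivAt_integral_of_dominated_loc_of_deriv_le
    (F := F) (F' := F') (x₀ := (0 : ℝ)) (a := a) (b := T) (bound := fun _ => C)
    (μ := MeasureTheory.volume) (Metric.ball_mem_nhds 0 one_pos)
    (Filter.Eventually.of_forall fun s =>
      ((hF4c.comp (hPc.comp (Continuous.prodMk_right s))).aestronglyMeasurable))
    ((hF4c.comp (hPc.comp (Continuous.prodMk_right 0))).intervalIntegrable a T)
    ((hF'c.comp (Continuous.prodMk_right 0)).aestronglyMeasurable)
    (Filter.Eventually.of_forall fun t ht s hs => by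
      have ht' : t ∈ Icc a T := mem_Icc_of_Ioc (by rwa [uIoc_of_le haT.le] at ht)
      have hs' : s ∈ Icc (-1 : ℝ) 1 := by
        rw [Metric.mem_ball, Real.dist_eq, sub_zero] at hs
        exact ⟨(abs_lt.mp hs).1.le, (abs_lt.mp hs).2.le⟩
      exact hC (s, t) ⟨hs', ht'⟩)
    (intervalIntegrable_const)
    (Filter.Eventually.of_forall fun t _ s _ => hdiff s t)
  obtain ⟨-, hg⟩ := hmain
  -- local extremality of g at 0
  set g : ℝ → ℝ := fun s => ∫ t in a..T, F s t with hgdef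
  -- bounds on h, h' over [a, T]
  obtain ⟨M₁, hM₁⟩ := isCompact_Icc.exists_bound_of_continuousOn (hhc.continuousOn (s := Icc a T))
  obtain ⟨M₂, hM₂⟩ := isCompact_Icc.exists_bound_of_continuousOn (hhc'.continuousOn (s := Icc a T))
  set M : ℝ := |M₁| + |M₂| + 1 with hMdef
  have hMpos : 0 < M := by positivity
  set δ : ℝ := ε / M with hδdef
  have hδpos : 0 < δ := div_pos hε hMpos
  -- for |s| < δ the perturbed curve is admissible
  have hadm : ∀ s : ℝ, |s| < δ →
      ∀ t ∈ Icc a T, |(ytil t + s * h t) - ytil t| < ε ∧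
        |deriv (fun t => ytil t + s * h t) t - deriv ytil t| < ε := by
    intro s hs t ht
    have hder : deriv (fun t => ytil t + s * h t) t = deriv ytil t + s * deriv h t := by
      exact ((hy.differentiable one_ne_zero t).hasDerivAt.add
        ((hh.differentiable one_ne_zero t).hasDerivAt.const_mul s)).deriv
    have hsM : |s| * M < ε := by
      calc |s| * M < δ * M := by
            apply mul_lt_mul_of_pos_right hs hMpos
        _ = ε := by rw [hδdef]; field_simp
    constructor
    · have : |s * h t| ≤ |s| * M := by
        rw [abs_mul]
        apply mul_le_mul_of_nonneg_left _ (abs_nonneg s)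
        calc |h t| ≤ M₁ := hM₁ t ht
          _ ≤ |M₁| := le_abs_self M₁
          _ ≤ M := by rw [hMdef]; linarith [abs_nonneg M₂]
      calc |(ytil t + s * h t) - ytil t| = |s * h t| := by ring_nf
        _ ≤ |s| * M := this
        _ < ε := hsM
    · rw [hder]
      have : |s * deriv h t| ≤ |s| * M := by
        rw [abs_mul]
        apply mul_le_mul_of_nonneg_left _ (abs_nonneg s)
        calc |deriv h t| ≤ M₂ := hM₂ t ht
          _ ≤ |M₂| := le_abs_self M₂
          _ ≤ M := by rw [hMdef]; linarith [abs_nonneg M₁]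
      calc |(deriv ytil t + s * deriv h t) - deriv ytil t| = |s * deriv h t| := by ring_nf
        _ ≤ |s| * M := this
        _ < ε := hsM
  -- g s is J of the perturbed curve
  have hgs : ∀ s : ℝ,
      g s = ∫ t in a..T, f t (ytil t + s * h t)
        (deriv (fun t => ytil t + s * h t) t) (ytil T + s * h T) := by
    intro s
    apply intervalIntegral.integral_congr
    intro t _
    have hder : deriv (fun t => ytil t + s * h t) t = deriv ytil t + s * deriv h t :=
      ((hy.differentiable one_ne_zero t).hasDerivAt.add
        ((hh.differentiable one_ne_zero t).hasDerivAt.const_mul s)).deriv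
    simp [hgdef, hFdef, hPdef, hF4def, hder]
  have hg0 : g 0 = ∫ t in a..T, f t (ytil t) (deriv ytil t) (ytil T) := by
    apply intervalIntegral.integral_congr
    intro t _
    simp [hgdef, hFdef, hPdef, hF4def]
  have hderiv0 : deriv g 0 = ∫ t in a..T, F' 0 t := hg.deriv
  have hzero : (∫ t in a..T, F' 0 t) = 0 := by
    rw [← hderiv0]
    cases hext with
    | inl hmax =>
      have hloc : IsLocalMax g 0 := by
        filter_upwards [Metric.ball_mem_nhds (0 : ℝ) hδpos] with s hs
        rw [Metric.mem_ball, Real.dist_eq, sub_zero] at hs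
        have hys : ContDiff ℝ 1 (fun t => ytil t + s * h t) :=
          hy.add (contDiff_const.mul hh)
        have hya : (fun t => ytil t + s * h t) a = ytil a := by simp [ha0]
        have hyT : (fun t => ytil t + s * h t) T = ytil T + s * h T := rfl
        have := hmax _ hys hya (hadm s hs)
        rw [hgs s, hg0]
        exact this
      exact hloc.deriv_eq_zero
    | inr hmin =>
      have hloc : IsLocalMin g 0 := by
        filter_upwards [Metric.ball_mem_nhds (0 : ℝ) hδpos] with s hs
        rw [Metric.mem_ball, Real.dist_eq, sub_zero] at hs
        have hys : ContDiff ℝ 1 (fun t => ytil t + s * h t) :=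
          hy.add (contDiff_const.mul hh)
        have hya : (fun t => ytil t + s * h t) a = ytil a := by simp [ha0]
        have := hmin _ hys hya (hadm s hs)
        rw [hgs s, hg0]
        exact this
      exact hloc.deriv_eq_zero
  -- identify the integrand with F' 0
  rw [← hzero]
  apply intervalIntegral.integral_congr
  intro t _
  have : F' 0 t = fderiv ℝ F4 (t, ytil t, deriv ytil t, ytil T) (0, h t, deriv h t, h T) := by
    simp [hF'def, hPdef]
  rw [this, fderiv_eval hf]
  ring
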